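/- In the Feline Texas Chainsaw Josephus game with gcd(n, k+1) = 1 and ℓ > k, if ℓ ≡ ℓ' (mod k) with ℓ' replaced so that 1 ≤ ℓ' (i.e., ℓ' = ℓ - k suffices), then the survivor is unchanged: T(n, k, ℓ) = T(n, k, ℓ - k). -/

import Mathlib

/-- One soldier (the head of the list) is skipped: moved to the back of the circle. -/
def skipOne (s : List (ℕ × ℕ)) : List (ℕ × ℕ) :=
  match s with
  | [] => []
  | p :: rest => rest ++ [p]

/-- The next alive soldier (head) loses one life; removed if dead.
    Does nothing once at most one soldier remains. -/
def hitOne (s : List (ℕ × ℕ)) : List (ℕ × ℕ) :=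
  match s with
  | [] => []
  | [p] => [p]
  | (x, l) :: rest => if l ≤ 1 then rest else rest ++ [(x, l - 1)]

/-- One round: skip one soldier, then hit the next `k` soldiers. -/
def felineRound (k : ℕ) (s : List (ℕ × ℕ)) : List (ℕ × ℕ) :=
  hitOne^[k] (skipOne s)

/-- Run the game with the given fuel, returning the survivor's label. -/
def felineRun (k : ℕ) : ℕ → List (ℕ × ℕ) → ℕ
  | 0, s => (s.headD (0, 0)).1
  | fuel + 1, s =>
    if s.length ≤ 1 then (s.headD (0, 0)).1
    else felineRun k fuel (felineRound k s)

/-- The survivor of the Feline Texas Chainsaw Josephus game with `n` soldiers,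
    parameter `k`, and `ℓ` lives each. -/
def felineT (n k ℓ : ℕ) : ℕ :=
  felineRun k (n * ℓ + 1) ((List.range n).map (fun i => (i, ℓ)))

/-- The survivor of the Texas Chainsaw Josephus game (one life each). -/
def chainsawT (n k : ℕ) : ℕ := felineT n k 1

/-- One-second steps of the one-life game, recording the elimination order.
    `c` is the number of eliminations remaining before the next skip. -/
def elimSteps (k : ℕ) : ℕ → ℕ → List ℕ → List ℕ
  | 0, _, s => s
  | fuel + 1, c, s =>
    match s with
    | [] => []
    | [x] => [x]
    | a :: rest =>
      if c = 0 then elimSteps k fuel k (rest ++ [a])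
      else a :: elimSteps k fuel (c - 1) rest

/-- The order in which soldiers are eliminated (the survivor is listed last). -/
def elimOrder (n k : ℕ) : List ℕ := elimSteps k ((k + 2) * (n + 1) * (n + 1)) 0 (List.range n)

/-- The second at which soldier `x` is eliminated (1-indexed position in the
    elimination order). -/
def elimTime (n k x : ℕ) : ℕ := (elimOrder n k).idxOf x + 1



namespace FelineAux

def hits (n k m t : ℕ) : ℕ :=
  ((Finset.range m).filter (fun j => j % n = t % n ∧ ¬ (k+1) ∣ j)).card

lemma hits_congr (n k m t t' : ℕ) (h : t % n = t' % n) : hits n k m t = hits n k m t' := by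
  simp [hits, h]

lemma hits_succ (n k m t : ℕ) :
    hits n k (m+1) t = if m % n = t % n ∧ ¬ (k+1) ∣ m then hits n k m t + 1 else hits n k m t := by
  unfold hits
  rw [Finset.range_add_one, Finset.filter_insert]
  split <;> simp [Finset.card_insert_of_notMem]

lemma hits_zero (n k t : ℕ) : hits n k 0 t = 0 := by simp [hits]

/-- unique `c < k+1` with `(k+1) ∣ a + c*n`. -/
lemma exists_unique_c (n k : ℕ) (hg : Nat.gcd n (k+1) = 1) (a : ℕ) :
    ∃! c, c < k + 1 ∧ (k+1) ∣ (a + c * n) := by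
  haveI : NeZero (k+1) := ⟨Nat.succ_ne_zero k⟩
  have hu : IsUnit ((n : ZMod (k+1))) := by
    rw [ZMod.isUnit_iff_coprime]; exact hg
  set b : ZMod (k+1) := (-(a : ZMod (k+1))) * ((n : ZMod (k+1)))⁻¹ with hb
  refine ⟨b.val, ⟨b.val_lt, ?_⟩, ?_⟩
  · have : ((a + b.val * n : ℕ) : ZMod (k+1)) = 0 := by
      push_cast
      rw [ZMod.natCast_val, ZMod.cast_id]
      rw [hb, mul_assoc, ZMod.inv_mul_of_unit _ hu]
      ring
    exact (ZMod.natCast_eq_zero_iff _ _).mp this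
  · rintro c ⟨hc, hdvd⟩
    have h1 : ((a + c * n : ℕ) : ZMod (k+1)) = 0 := (ZMod.natCast_eq_zero_iff _ _).mpr hdvd
    push_cast at h1
    have h2 : (c : ZMod (k+1)) * n = b * n := by
      rw [hb, mul_assoc, ZMod.inv_mul_of_unit _ hu, mul_one]
      linear_combination h1
    have h3 : (c : ZMod (k+1)) = b := hu.mul_left_cancel (by rw [mul_comm b, mul_comm (c:ZMod (k+1))] at h2; exact h2)
    have : c % (k+1) = b.val := by rw [← ZMod.val_natCast, h3]
    rw [Nat.mod_eq_of_lt hc] at this; exact this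

lemma filter_mod_eq_image (n k r : ℕ) (hr : r < n) :
    (Finset.range (n*(k+1))).filter (fun j => j % n = r) =
      (Finset.range (k+1)).image (fun c => r + c * n) := by
  ext j
  simp only [Finset.mem_filter, Finset.mem_range, Finset.mem_image]
  constructor
  · rintro ⟨hj, hm⟩
    refine ⟨j / n, ?_, ?_⟩
    · have hn : 0 < n := by omega
      rw [Nat.div_lt_iff_lt_mul hn, Nat.mul_comm]; omega
    · rw [← hm, Nat.mod_add_div' j n]
  · rintro ⟨c, hc, rfl⟩
    constructor
    · calc r + c * n < n + c * n := by omega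
        _ = (c+1) * n := by ring
        _ ≤ (k+1) * n := by
          have : c + 1 ≤ k + 1 := hc
          exact Nat.mul_le_mul_right n this
        _ = n * (k+1) := by ring
    · rw [Nat.add_mul_mod_self_right, Nat.mod_eq_of_lt hr]

lemma card_S (n k r : ℕ) (hr : r < n) :
    ((Finset.range (n*(k+1))).filter (fun j => j % n = r)).card = k + 1 := by
  rw [filter_mod_eq_image n k r hr, Finset.card_image_of_injective, Finset.card_range]
  intro a b hab
  simp only at hab
  have hn : 0 < n := by omega
  exact Nat.eq_of_mul_eq_mul_right hn (by omega)

lemma card_S_div (n k r : ℕ) (hr : r < n) (hg : Nat.gcd n (k+1) = 1) :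
    (((Finset.range (n*(k+1))).filter (fun j => j % n = r)).filter (fun j => (k+1) ∣ j)).card = 1 := by
  obtain ⟨c₀, ⟨hc₀, hd₀⟩, huniq⟩ := exists_unique_c n k hg r
  rw [Finset.card_eq_one]
  refine ⟨r + c₀ * n, ?_⟩
  ext j
  simp only [Finset.mem_filter, Finset.mem_range, Finset.mem_singleton]
  constructor
  · rintro ⟨⟨hj, hm⟩, hd⟩
    have : j = r + (j / n) * n := by rw [← hm, Nat.mod_add_div' j n]
    have hc : j / n < k + 1 := by
      have hn : 0 < n := by omega
      rw [Nat.div_lt_iff_lt_mul hn, Nat.mul_comm]; omega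
    have := huniq (j / n) ⟨hc, by rw [← this]; exact hd⟩
    rw [‹j = r + (j/n) * n›, this]
  · rintro rfl
    refine ⟨⟨?_, ?_⟩, hd₀⟩
    · calc r + c₀ * n < n + c₀ * n := by omega
        _ = (c₀+1) * n := by ring
        _ ≤ (k+1) * n := Nat.mul_le_mul_right n hc₀
        _ = n * (k+1) := by ring
    · rw [Nat.add_mul_mod_self_right, Nat.mod_eq_of_lt hr]

lemma hits_top (n k : ℕ) (hn : 0 < n) (hg : Nat.gcd n (k+1) = 1) (t : ℕ) :
    hits n k (n*(k+1)) t = k := by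
  unfold hits
  have hr : t % n < n := Nat.mod_lt t hn
  have h1 := card_S n k (t % n) hr
  have h2 := card_S_div n k (t % n) hr hg
  have hsplit := Finset.card_filter_add_card_filter_not
    (s := (Finset.range (n*(k+1))).filter (fun j => j % n = t % n)) (p := fun j => (k+1) ∣ j)
  rw [h1, h2] at hsplit
  rw [← Finset.filter_filter]
  omega

lemma hits_lt (n k m : ℕ) (hn : 0 < n) (hg : Nat.gcd n (k+1) = 1)
    (hm : m < n*(k+1)) (hnd : ¬ (k+1) ∣ m) : hits n k m m + 2 ≤ k + 1 := by
  obtain ⟨c₀, ⟨hc₀, hd₀⟩, _⟩ := exists_unique_c n k hg (m % n)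
  set w := m % n + c₀ * n with hw
  set A := (Finset.range m).filter (fun j => j % n = m % n ∧ ¬ (k+1) ∣ j) with hA
  set S := (Finset.range (n*(k+1))).filter (fun j => j % n = m % n) with hS
  have hr : m % n < n := Nat.mod_lt m hn
  have hwS : w ∈ S := by
    simp only [hS, Finset.mem_filter, Finset.mem_range]
    refine ⟨?_, ?_⟩
    · calc w < n + c₀ * n := by omega
        _ = (c₀+1) * n := by ring
        _ ≤ (k+1) * n := Nat.mul_le_mul_right n hc₀
        _ = n * (k+1) := by ring
    · rw [hw, Nat.add_mul_mod_self_right, Nat.mod_eq_of_lt hr]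
  have hmS : m ∈ S := by
    simp only [hS, Finset.mem_filter, Finset.mem_range]
    exact ⟨hm, trivial⟩
  have hwm : w ≠ m := by
    intro h; apply hnd; rw [← h]; exact hd₀
  have hmA : m ∉ A := by simp [hA]
  have hwA : w ∉ A := by
    simp only [hA, Finset.mem_filter, Finset.mem_range]
    rintro ⟨-, -, h⟩; exact h hd₀
  have hsub : insert w (insert m A) ⊆ S := by
    intro j hj
    simp only [Finset.mem_insert] at hj
    rcases hj with rfl | rfl | hj
    · exact hwS
    · exact hmS
    · simp only [hA, Finset.mem_filter, Finset.mem_range] at hj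
      simp only [hS, Finset.mem_filter, Finset.mem_range]
      exact ⟨by omega, hj.2.1⟩
  have hcard : (insert w (insert m A)).card = A.card + 2 := by
    rw [Finset.card_insert_of_notMem (by simp [hwm, hwA]),
        Finset.card_insert_of_notMem hmA]
  have hle := Finset.card_le_card hsub
  rw [hcard] at hle
  rw [hS, card_S n k (m % n) hr] at hle
  exact hle



def stf (n k ℓ m : ℕ) (i : ℕ) : ℕ × ℕ := ((m + i) % n, ℓ - hits n k m (m + i))

def state (n k ℓ m : ℕ) : List (ℕ × ℕ) := (List.range n).map (stf n k ℓ m)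

lemma state_zero (n k ℓ : ℕ) : state n k ℓ 0 = (List.range n).map (fun i => (i, ℓ)) := by
  apply List.map_congr_left
  intro i hi
  rw [List.mem_range] at hi
  simp [stf, hits_zero, Nat.mod_eq_of_lt hi]

lemma state_top (n k ℓ : ℕ) (hn : 0 < n) (hg : Nat.gcd n (k+1) = 1) :
    state n k ℓ (n*(k+1)) = (List.range n).map (fun i => (i, ℓ - k)) := by
  apply List.map_congr_left
  intro i hi
  rw [List.mem_range] at hi
  simp [stf, hits_top n k hn hg, Nat.mul_add_mod, Nat.mod_eq_of_lt hi]

lemma mod_ne_of_lt (n m i : ℕ) (h1 : 0 < i) (h2 : i < n) : ¬ (m % n = (m + i) % n) := by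
  intro h
  have : n ∣ (m + i) - m := (Nat.modEq_iff_dvd' (by omega)).mp h
  simp only [Nat.add_sub_cancel_left] at this
  have := Nat.le_of_dvd h1 this
  omega

lemma skipOne_cons (a : ℕ × ℕ) (t : List (ℕ × ℕ)) : skipOne (a :: t) = t ++ [a] := rfl

lemma hitOne_cons (x l : ℕ) (b : ℕ × ℕ) (t : List (ℕ × ℕ)) :
    hitOne ((x, l) :: b :: t) = if l ≤ 1 then b :: t else (b :: t) ++ [(x, l - 1)] := rfl

lemma state_cons (n k ℓ m : ℕ) (hn : 0 < n) :
    state n k ℓ m = stf n k ℓ m 0 ::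
      (List.range (n-1)).map (fun i => stf n k ℓ m (i+1)) := by
  obtain ⟨N, rfl⟩ : ∃ N, n = N + 1 := ⟨n - 1, by omega⟩
  unfold state
  rw [List.range_succ_eq_map, List.map_cons, List.map_map]
  rfl

lemma state_snoc (n k ℓ m : ℕ) (hn : 0 < n) :
    state n k ℓ m =
      (List.range (n-1)).map (fun i => stf n k ℓ m i) ++ [stf n k ℓ m (n-1)] := by
  obtain ⟨N, rfl⟩ : ∃ N, n = N + 1 := ⟨n - 1, by omega⟩
  unfold state
  rw [List.range_succ, List.map_append]
  rfl

lemma hits_succ_ne (n k m i : ℕ) (h1 : 0 < i) (h2 : i < n) :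
    hits n k (m+1) (m + i) = hits n k m (m + i) := by
  rw [hits_succ, if_neg]
  rintro ⟨h, -⟩
  exact mod_ne_of_lt n m i h1 h2 h

lemma hits_succ_self (n k m : ℕ) :
    hits n k (m+1) (m + n) = if (k+1) ∣ m then hits n k m m else hits n k m m + 1 := by
  rw [hits_succ]
  have h1 : m % n = (m + n) % n := (Nat.add_mod_right m n).symm
  have h2 : hits n k m (m + n) = hits n k m m := hits_congr n k m _ _ h1.symm
  by_cases hd : (k+1) ∣ m
  · rw [if_neg (by tauto), if_pos hd, h2]
  · rw [if_pos ⟨h1, hd⟩, if_neg hd, h2]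

lemma stf_shift (n k ℓ m i : ℕ) (h : i + 1 < n) :
    stf n k ℓ (m+1) i = stf n k ℓ m (i+1) := by
  unfold stf
  rw [show m + 1 + i = m + (i + 1) from by omega,
      hits_succ_ne n k m (i+1) (by omega) h]

lemma stf_last_skip (n k ℓ m : ℕ) (hn : 0 < n) (hd : (k+1) ∣ m) :
    stf n k ℓ (m+1) (n-1) = stf n k ℓ m 0 := by
  unfold stf
  rw [show m + 1 + (n - 1) = m + n from by omega, Nat.add_mod_right,
      hits_succ_self, if_pos hd, Nat.add_zero]

lemma stf_last_hit (n k ℓ m : ℕ) (hn : 0 < n) (hd : ¬ (k+1) ∣ m) :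
    stf n k ℓ (m+1) (n-1) = (m % n, ℓ - hits n k m m - 1) := by
  unfold stf
  rw [show m + 1 + (n - 1) = m + n from by omega, Nat.add_mod_right,
      hits_succ_self, if_neg hd, ← Nat.sub_sub]

lemma tail_shift (n k ℓ m : ℕ) :
    (List.range (n-1)).map (fun i => stf n k ℓ (m+1) i) =
    (List.range (n-1)).map (fun i => stf n k ℓ m (i+1)) := by
  apply List.map_congr_left
  intro i hi
  rw [List.mem_range] at hi
  exact stf_shift n k ℓ m i (by omega)

lemma skip_state (n k ℓ m : ℕ) (hn : 0 < n) (hd : (k+1) ∣ m) :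
    skipOne (state n k ℓ m) = state n k ℓ (m+1) := by
  rw [state_cons n k ℓ m hn, state_snoc n k ℓ (m+1) hn, skipOne_cons,
      tail_shift, stf_last_skip n k ℓ m hn hd]

lemma hit_state (n k ℓ m : ℕ) (hn : 2 ≤ n) (hd : ¬ (k+1) ∣ m)
    (hl : 2 ≤ ℓ - hits n k m m) :
    hitOne (state n k ℓ m) = state n k ℓ (m+1) := by
  rw [state_cons n k ℓ m (by omega), state_snoc n k ℓ (m+1) (by omega),
      tail_shift, stf_last_hit n k ℓ m (by omega) hd]
  obtain ⟨N, hN⟩ : ∃ N, n - 1 = N + 1 := ⟨n - 2, by omega⟩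
  rw [hN, List.range_succ_eq_map, List.map_cons, List.map_map]
  have e0 : stf n k ℓ m 0 = ((m + 0) % n, ℓ - hits n k m (m + 0)) := rfl
  rw [e0, hitOne_cons, if_neg (by simp at hl ⊢; omega)]
  rw [Nat.add_zero]
  rfl


lemma lives_ge (n k ℓ m : ℕ) (hn : 0 < n) (hg : Nat.gcd n (k+1) = 1)
    (hm : m < n*(k+1)) (hnd : ¬ (k+1) ∣ m) (hl : k + 1 ≤ ℓ) :
    2 ≤ ℓ - hits n k m m := by
  have := hits_lt n k m hn hg hm hnd
  omega

lemma hit_iter (n k ℓ r : ℕ) (hn : 2 ≤ n) (hg : Nat.gcd n (k+1) = 1)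
    (hl : k + 1 ≤ ℓ) (hr : r < n) :
    ∀ j, j ≤ k → hitOne^[j] (state n k ℓ (r*(k+1)+1)) = state n k ℓ (r*(k+1)+1+j) := by
  intro j
  induction j with
  | zero => simp
  | succ j ih =>
    intro hj
    rw [Function.iterate_succ_apply', ih (by omega)]
    have hnd : ¬ (k+1) ∣ (r*(k+1)+1+j) := by
      intro hdvd
      have h1 : (k+1) ∣ r*(k+1) := Dvd.intro r (Nat.mul_comm (k+1) r)
      have h2 : (k+1) ∣ (1+j) := by
        have := Nat.dvd_sub hdvd h1
        rwa [show r*(k+1)+1+j - r*(k+1) = 1 + j from by omega] at this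
      have := Nat.le_of_dvd (by omega) h2
      omega
    have hmlt : r*(k+1)+1+j < n*(k+1) := by
      have h1 : r*(k+1)+1+j < (r+1)*(k+1) := by
        have : (r+1)*(k+1) = r*(k+1) + (k+1) := by ring
        omega
      have h2 : (r+1)*(k+1) ≤ n*(k+1) := Nat.mul_le_mul_right (k+1) hr
      omega
    have := hit_state n k ℓ (r*(k+1)+1+j) hn hnd
      (lives_ge n k ℓ _ (by omega) hg hmlt hnd hl)
    rw [this, Nat.add_assoc _ j 1]

lemma round_state (n k ℓ r : ℕ) (hn : 2 ≤ n) (hg : Nat.gcd n (k+1) = 1)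
    (hl : k + 1 ≤ ℓ) (hr : r < n) :
    felineRound k (state n k ℓ (r*(k+1))) = state n k ℓ ((r+1)*(k+1)) := by
  unfold felineRound
  rw [skip_state n k ℓ (r*(k+1)) (by omega) (Dvd.intro r (Nat.mul_comm (k+1) r)),
      hit_iter n k ℓ r hn hg hl hr k le_rfl]
  congr 1
  ring

lemma state_length (n k ℓ m : ℕ) : (state n k ℓ m).length = n := by
  simp [state]

lemma felineRun_succ (k f : ℕ) (s : List (ℕ × ℕ)) (h : ¬ s.length ≤ 1) :
    felineRun k (f+1) s = felineRun k f (felineRound k s) := by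
  simp [felineRun, h]

lemma run_states (n k ℓ : ℕ) (hn : 2 ≤ n) (hg : Nat.gcd n (k+1) = 1)
    (hl : k + 1 ≤ ℓ) :
    ∀ r, r ≤ n → ∀ f, felineRun k (r + f) (state n k ℓ 0) =
      felineRun k f (state n k ℓ (r*(k+1))) := by
  intro r
  induction r with
  | zero => intro _ f; simp
  | succ r ih =>
    intro hr f
    have h1 : r + 1 + f = r + (f + 1) := by omega
    rw [h1, ih (by omega) (f+1),
        felineRun_succ k f _ (by rw [state_length]; omega),
        round_state n k ℓ r hn hg hl (by omega)]


def sumLives (s : List (ℕ × ℕ)) : ℕ := (s.map Prod.snd).sum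

def PosL (s : List (ℕ × ℕ)) : Prop := ∀ p ∈ s, 1 ≤ p.2

lemma sumLives_skipOne (s : List (ℕ × ℕ)) : sumLives (skipOne s) = sumLives s := by
  cases s with
  | nil => rfl
  | cons a t => simp [skipOne, sumLives]; omega

lemma skipOne_length (s : List (ℕ × ℕ)) : (skipOne s).length = s.length := by
  cases s with
  | nil => rfl
  | cons a t => simp [skipOne]

lemma skipOne_pos (s : List (ℕ × ℕ)) (h : PosL s) : PosL (skipOne s) := by
  cases s with
  | nil => exact h
  | cons a t =>
    intro p hp
    simp only [skipOne, List.mem_append, List.mem_singleton] at hp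
    rcases hp with hp | rfl
    · exact h p (by simp [hp])
    · exact h p (by simp)

lemma hitOne_sum_le (s : List (ℕ × ℕ)) : sumLives (hitOne s) ≤ sumLives s := by
  match s with
  | [] => exact le_rfl
  | [p] => exact le_rfl
  | (x, l) :: b :: t =>
    rw [hitOne_cons]
    split <;> simp [sumLives] <;> omega

lemma hitOne_sum_lt (s : List (ℕ × ℕ)) (h2 : 2 ≤ s.length) (hp : PosL s) :
    sumLives (hitOne s) < sumLives s := by
  match s with
  | [] => simp at h2
  | [p] => simp at h2
  | (x, l) :: b :: t =>
    have hl : 1 ≤ l := hp (x, l) (by simp)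
    rw [hitOne_cons]
    split <;> simp [sumLives] <;> omega

lemma hitOne_pos (s : List (ℕ × ℕ)) (h : PosL s) : PosL (hitOne s) := by
  match s with
  | [] => exact h
  | [p] => exact h
  | (x, l) :: b :: t =>
    rw [hitOne_cons]
    split
    · intro p hp; exact h p (by simp [hp])
    · intro p hp
      simp only [List.mem_append, List.mem_singleton] at hp
      rcases hp with hp | rfl
      · exact h p (by simp [hp])
      · simp only
        have : ¬ l ≤ 1 := by assumption
        omega

lemma hitOne_iter_sum_le (j : ℕ) (s : List (ℕ × ℕ)) :
    sumLives (hitOne^[j] s) ≤ sumLives s := by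
  induction j with
  | zero => simp
  | succ j ih =>
    rw [Function.iterate_succ_apply']
    exact le_trans (hitOne_sum_le _) ih

lemma hitOne_iter_pos (j : ℕ) (s : List (ℕ × ℕ)) (h : PosL s) : PosL (hitOne^[j] s) := by
  induction j with
  | zero => simpa
  | succ j ih =>
    rw [Function.iterate_succ_apply']
    exact hitOne_pos _ ih

lemma round_sum_lt (k : ℕ) (hk : 1 ≤ k) (s : List (ℕ × ℕ)) (h2 : 2 ≤ s.length)
    (hp : PosL s) : sumLives (felineRound k s) < sumLives s := by
  unfold felineRound
  obtain ⟨j, rfl⟩ : ∃ j, k = j + 1 := ⟨k - 1, by omega⟩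
  rw [Function.iterate_succ_apply]
  calc sumLives (hitOne^[j] (hitOne (skipOne s))) ≤ sumLives (hitOne (skipOne s)) :=
        hitOne_iter_sum_le j _
    _ < sumLives (skipOne s) := hitOne_sum_lt _ (by rw [skipOne_length]; omega)
        (skipOne_pos s hp)
    _ = sumLives s := sumLives_skipOne s

lemma round_pos (k : ℕ) (s : List (ℕ × ℕ)) (hp : PosL s) : PosL (felineRound k s) :=
  hitOne_iter_pos k _ (skipOne_pos s hp)

lemma fuel_stab_succ (k : ℕ) (hk : 1 ≤ k) :
    ∀ fuel s, PosL s → sumLives s ≤ fuel → felineRun k (fuel+1) s = felineRun k fuel s := by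
  intro fuel
  induction fuel with
  | zero =>
    intro s hp hs
    match s with
    | [] => simp [felineRun]
    | p :: t =>
      exfalso
      have := hp p (by simp)
      simp [sumLives] at hs
      omega
  | succ fuel ih =>
    intro s hp hs
    by_cases h : s.length ≤ 1
    · simp [felineRun, h]
    · rw [felineRun_succ k (fuel+1) s h, felineRun_succ k fuel s h]
      exact ih (felineRound k s) (round_pos k s hp)
        (by have := round_sum_lt k hk s (by omega) hp; omega)

lemma fuel_stab (k : ℕ) (hk : 1 ≤ k) (f1 d : ℕ) (s : List (ℕ × ℕ))
    (hp : PosL s) (hs : sumLives s ≤ f1) :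
    felineRun k (f1 + d) s = felineRun k f1 s := by
  induction d with
  | zero => rfl
  | succ d ih =>
    rw [show f1 + (d+1) = (f1 + d) + 1 from rfl,
        fuel_stab_succ k hk (f1+d) s hp (by omega), ih]

lemma sumLives_init (n c : ℕ) :
    sumLives ((List.range n).map (fun i => (i, c))) = n * c := by
  induction n with
  | zero => simp [sumLives]
  | succ n ih =>
    rw [List.range_succ, List.map_append]
    simp only [sumLives, List.map_append, List.sum_append] at ih ⊢
    simp only [List.map_map] at ih ⊢
    rw [ih]; simp; ring

lemma pos_init (n c : ℕ) (hc : 1 ≤ c) : PosL ((List.range n).map (fun i => (i, c))) := by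
  intro p hp
  simp only [List.mem_map, List.mem_range] at hp
  obtain ⟨i, -, rfl⟩ := hp
  exact hc


end FelineAux

/-- Lives reduction lemma: if `gcd(n, k+1) = 1` and `ℓ > k`, then
`T(n, k, ℓ) = T(n, k, ℓ - k)`. -/
theorem feline_reduce_lives (n k ℓ : ℕ)
    (hk : 1 ≤ k) (hg : Nat.gcd n (k + 1) = 1) (hl : k < ℓ) :
    felineT n k ℓ = felineT n k (ℓ - k) := by
  rcases Nat.lt_or_ge n 2 with hn | hn
  · interval_cases n
    · simp [felineT, felineRun]
    · simp [felineT, felineRun, List.range_succ]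
  · have hl1 : k + 1 ≤ ℓ := hl
    obtain ⟨L, rfl⟩ : ∃ L, ℓ = L + 1 := ⟨ℓ - 1, by omega⟩
    unfold felineT
    rw [← FelineAux.state_zero n k (L+1)]
    have hfuel : n * (L+1) + 1 = n + (n*L + 1) := by ring
    rw [hfuel, FelineAux.run_states n k (L+1) hn hg hl1 n le_rfl (n*L+1),
        FelineAux.state_top n k (L+1) (by omega) hg]
    have hc : 1 ≤ L + 1 - k := by omega
    have hles : n*(L+1-k) + 1 ≤ n*L + 1 := by
      have h1 : L+1-k ≤ L := by omega
      have := Nat.mul_le_mul_left n h1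
      omega
    obtain ⟨d, hd⟩ : ∃ d, n*L+1 = (n*(L+1-k)+1) + d := ⟨n*L+1 - (n*(L+1-k)+1), by omega⟩
    rw [hd, FelineAux.fuel_stab k hk (n*(L+1-k)+1) d _ (FelineAux.pos_init n _ hc)
        (by rw [FelineAux.sumLives_init]; omega)]
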